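/- Let H be a complex Hilbert space (a complete inner product space over ℂ) and let P, Q : H →L[ℂ] H be positive operators (each is self-adjoint and satisfies ⟨P x, x⟩ ≥ 0 and ⟨Q x, x⟩ ≥ 0 for all x) with P ∘ Q = 0. Then ‖P + Q‖ = max(‖P‖, ‖Q‖). -/

import Mathlib

open scoped ComplexOrder

/-- If `P` and `Q` are positive operators on a complex Hilbert space with `P ∘ Q = 0`,
then `‖P + Q‖ = max ‖P‖ ‖Q‖`. -/
theorem norm_add_of_positive_of_comp_eq_zero {H : Type*} [NormedAddCommGroup H]
    [InnerProductSpace ℂ H] [CompleteSpace H]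
    (P Q : H →L[ℂ] H)
    (hP : IsSelfAdjoint P) (hQ : IsSelfAdjoint Q)
    (hPpos : ∀ x : H, 0 ≤ (inner ℂ (P x) x : ℂ))
    (hQpos : ∀ x : H, 0 ≤ (inner ℂ (Q x) x : ℂ))
    (hPQ : P ∘L Q = 0) :
    ‖P + Q‖ = max ‖P‖ ‖Q‖ := by
  have hPQ' : P * Q = 0 := hPQ
  have hQP : Q * P = 0 := by
    have := congrArg star hPQ'
    rwa [star_mul, hP.star_eq, hQ.star_eq, star_zero] at this
  -- nonnegativity in the operator order
  have hP0 : (0 : H →L[ℂ] H) ≤ P := by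
    rw [ContinuousLinearMap.nonneg_iff_isPositive]
    exact ⟨hP.isSymmetric, fun x => (Complex.le_def.mp (hPpos x)).1⟩
  have hQ0 : (0 : H →L[ℂ] H) ≤ Q := by
    rw [ContinuousLinearMap.nonneg_iff_isPositive]
    exact ⟨hQ.isSymmetric, fun x => (Complex.le_def.mp (hQpos x)).1⟩
  -- ≥ direction
  have hge1 : ‖P‖ ≤ ‖P + Q‖ :=
    CStarAlgebra.norm_le_norm_of_nonneg_of_le hP0 (le_add_of_nonneg_right hQ0)
  have hge2 : ‖Q‖ ≤ ‖P + Q‖ :=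
    CStarAlgebra.norm_le_norm_of_nonneg_of_le hQ0 (le_add_of_nonneg_left hP0)
  refine le_antisymm ?_ (max_le hge1 hge2)
  -- powers split
  have hpow : ∀ n : ℕ, (P + Q) ^ (n + 1) = P ^ (n + 1) + Q ^ (n + 1) := by
    intro n
    induction n with
    | zero => simp
    | succ n ih =>
      have h1 : P * Q ^ (n + 1) = 0 := by rw [pow_succ', ← mul_assoc, hPQ', zero_mul]
      have h2 : Q * P ^ (n + 1) = 0 := by rw [pow_succ', ← mul_assoc, hQP, zero_mul]
      calc (P + Q) ^ (n + 2) = (P + Q) * ((P + Q) ^ (n + 1)) := by rw [pow_succ']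
        _ = P ^ (n + 2) + Q ^ (n + 2) := by
            rw [ih, mul_add, add_mul, add_mul, h1, h2, ← pow_succ', ← pow_succ']
            abel
  have hT : IsSelfAdjoint (P + Q) := hP.add hQ
  set m := max ‖P‖ ‖Q‖ with hm
  have hm0 : 0 ≤ m := le_trans (norm_nonneg P) (le_max_left _ _)
  -- key inequality for powers of two
  have key : ∀ n : ℕ, ‖P + Q‖ ^ (2 ^ n) ≤ 2 * m ^ (2 ^ n) := by
    intro n
    have h2n : ∃ k, 2 ^ n = k + 1 := ⟨2 ^ n - 1, (Nat.succ_pred_eq_of_pos (pow_pos two_pos n)).symm⟩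
    obtain ⟨k, hk⟩ := h2n
    have hnorm : ‖P + Q‖ ^ (2 ^ n) = ‖(P + Q) ^ (2 ^ n)‖ := by
      have := hT.nnnorm_pow_two_pow n
      calc ‖P + Q‖ ^ 2 ^ n = ((‖P + Q‖₊ : ℝ)) ^ 2 ^ n := by norm_cast
        _ = ((‖P + Q‖₊ ^ 2 ^ n : NNReal) : ℝ) := by push_cast; ring
        _ = ‖(P + Q) ^ (2 ^ n)‖ := by rw [← this]; rfl
    rw [hnorm, hk, hpow k]
    calc ‖P ^ (k + 1) + Q ^ (k + 1)‖ ≤ ‖P ^ (k + 1)‖ + ‖Q ^ (k + 1)‖ := norm_add_le _ _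
      _ ≤ ‖P‖ ^ (k + 1) + ‖Q‖ ^ (k + 1) := add_le_add (norm_pow_le' _ (Nat.succ_pos k))
            (norm_pow_le' _ (Nat.succ_pos k))
      _ ≤ m ^ (k + 1) + m ^ (k + 1) := add_le_add
            (pow_le_pow_left₀ (norm_nonneg _) (le_max_left _ _) _)
            (pow_le_pow_left₀ (norm_nonneg _) (le_max_right _ _) _)
      _ = 2 * m ^ (k + 1) := by ring
  by_contra hlt
  push_neg at hlt
  have hmpos : 0 < m := by
    rcases hm0.lt_or_eq with h | h
    · exact h
    · exfalso
      have hP0' : ‖P‖ = 0 := le_antisymm (h ▸ hm ▸ le_max_left _ _) (norm_nonneg _)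
      have hQ0' : ‖Q‖ = 0 := le_antisymm (h ▸ hm ▸ le_max_right _ _) (norm_nonneg _)
      have : P = 0 := norm_eq_zero.mp hP0'
      have : Q = 0 := norm_eq_zero.mp hQ0'
      rw [‹P = 0›, ‹Q = 0›, add_zero, norm_zero] at hlt
      exact absurd hlt (not_lt.mpr hm0)
  have hratio : 1 < ‖P + Q‖ / m := (one_lt_div hmpos).mpr hlt
  obtain ⟨n, hn⟩ := pow_unbounded_of_one_lt (2 : ℝ) hratio
  have hn2 : (2 : ℝ) < (‖P + Q‖ / m) ^ (2 ^ n) :=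
    lt_of_lt_of_le hn (pow_le_pow_right₀ hratio.le (Nat.lt_two_pow_self (n := n)).le)
  have := key n
  rw [div_pow] at hn2
  have h2' : 2 * m ^ (2 ^ n) < ‖P + Q‖ ^ (2 ^ n) := by
    have hmp : 0 < m ^ (2 ^ n) := pow_pos hmpos _
    calc 2 * m ^ (2 ^ n) < (‖P + Q‖ ^ (2 ^ n) / m ^ (2 ^ n)) * m ^ (2 ^ n) := by
          exact mul_lt_mul_of_pos_right hn2 hmp
      _ = ‖P + Q‖ ^ (2 ^ n) := div_mul_cancel₀ _ hmp.ne'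
  exact absurd (this.trans_lt h2') (lt_irrefl _)
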